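/- Suppose A x* − B|x*| = b, M ∈ R^{m×m} is nonsingular, and for every diagonal matrix D with entries in [−1,1] the matrix A + B D has full column rank. Then for all x ∈ R^n, ‖x − x*‖₂ ≤ (max over such D of ‖(M A + M B D)^†‖₂) · ‖M(A x − B|x| − b)‖₂. -/

import Mathlib

open Matrix

/-- The `i`-th largest singular value of a real matrix (0-indexed),
defined as the `i`-th entry of the decreasingly sorted list of square roots
of the eigenvalues of `Aᴴ * A`; `0` if `i` is out of range. -/
noncomputable def sv {m n : ℕ} (A : Matrix (Fin m) (Fin n) ℝ) (i : ℕ) : ℝ :=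
  ((List.ofFn fun j : Fin n =>
      Real.sqrt ((Matrix.isHermitian_conjTranspose_mul_self A).eigenvalues j)).insertionSort
    (· ≥ ·)).getD i 0

/-- Euclidean norm of a vector. -/
noncomputable def vnorm {n : ℕ} (x : Fin n → ℝ) : ℝ := Real.sqrt (∑ i, x i ^ 2)

/-- The Moore–Penrose pseudoinverse of a matrix with full column rank:
`C† = (Cᵀ C)⁻¹ Cᵀ`. -/
noncomputable def pinv {m n : ℕ} (C : Matrix (Fin m) (Fin n) ℝ) : Matrix (Fin n) (Fin m) ℝ :=
  (Cᵀ * C)⁻¹ * Cᵀ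

/-! ### Auxiliary lemmas -/

lemma sorted_head_max (l : List ℝ) (hl : l ≠ []) :
    (l.insertionSort (· ≥ ·)).getD 0 0 ∈ l ∧
      ∀ a ∈ l, a ≤ (l.insertionSort (· ≥ ·)).getD 0 0 := by
  have hperm := List.perm_insertionSort (· ≥ ·) l
  have hsort := List.pairwise_insertionSort (· ≥ ·) l
  rcases h : l.insertionSort (· ≥ ·) with _ | ⟨a, t⟩
  · exact absurd (h ▸ hperm).nil_eq.symm hl
  · rw [h] at hperm hsort
    constructor
    · exact hperm.mem_iff.mp List.mem_cons_self
    · intro x hx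
      simp only [List.getD_cons_zero]
      rcases List.mem_cons.mp (hperm.symm.mem_iff.mp hx) with rfl | hxt
      · exact le_refl x
      · exact (List.pairwise_cons.mp hsort).1 x hxt

lemma vnorm_nonneg {k : ℕ} (v : Fin k → ℝ) : 0 ≤ vnorm v := Real.sqrt_nonneg _

lemma vnorm_sq {k : ℕ} (v : Fin k → ℝ) : vnorm v ^ 2 = v ⬝ᵥ v := by
  rw [vnorm, Real.sq_sqrt (Finset.sum_nonneg fun i _ => sq_nonneg _)]
  simp [dotProduct, sq]

lemma dot_mulVec_self {a b : ℕ} (M : Matrix (Fin a) (Fin b) ℝ) (v : Fin b → ℝ) :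
    (M *ᵥ v) ⬝ᵥ (M *ᵥ v) = v ⬝ᵥ ((Mᵀ * M) *ᵥ v) := by
  rw [← mulVec_mulVec]
  conv_rhs => rw [dotProduct_mulVec, vecMul_transpose]

lemma quad_decomp {k : ℕ} {S : Matrix (Fin k) (Fin k) ℝ} (hS : S.IsHermitian) (w : Fin k → ℝ) :
    ∃ y : Fin k → ℝ, w ⬝ᵥ (S *ᵥ w) = ∑ j, hS.eigenvalues j * y j ^ 2 ∧ w ⬝ᵥ w = ∑ j, y j ^ 2 := by
  set U : Matrix (Fin k) (Fin k) ℝ := (hS.eigenvectorUnitary : Matrix (Fin k) (Fin k) ℝ) with hU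
  have hstar : star U = Uᵀ := by
    rw [Matrix.star_eq_conjTranspose, conjTranspose_eq_transpose_of_trivial]
  have hUU : U * Uᵀ = 1 := by
    rw [← hstar]; exact (Matrix.mem_unitaryGroup_iff).mp hS.eigenvectorUnitary.2
  refine ⟨Uᵀ *ᵥ w, ?_, ?_⟩
  · conv_lhs => rw [hS.spectral_theorem]
    simp only [Unitary.conjStarAlgAut_apply, Unitary.coe_star]
    rw [← hU]
    rw [hstar, RCLike.ofReal_real_eq_id]
    rw [← mulVec_mulVec, ← mulVec_mulVec, dotProduct_mulVec, ← mulVec_transpose]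
    simp [dotProduct, mulVec_diagonal, sq, mul_comm, mul_assoc, mul_left_comm]
  · have h2 : (Uᵀ *ᵥ w) ⬝ᵥ (Uᵀ *ᵥ w) = w ⬝ᵥ w := by
      rw [dot_mulVec_self, transpose_transpose, hUU, one_mulVec]
    rw [← h2]
    simp [dotProduct, sq]

lemma sv_spec {a b : ℕ} (P : Matrix (Fin a) (Fin b) ℝ) (hb : 0 < b) :
    (∃ j : Fin b,
        sv P 0 = Real.sqrt ((Matrix.isHermitian_conjTranspose_mul_self P).eigenvalues j)) ∧
      ∀ j : Fin b,
        Real.sqrt ((Matrix.isHermitian_conjTranspose_mul_self P).eigenvalues j) ≤ sv P 0 := by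
  have hl : (List.ofFn fun j : Fin b =>
      Real.sqrt ((Matrix.isHermitian_conjTranspose_mul_self P).eigenvalues j)) ≠ [] := by
    intro h
    have := congrArg List.length h
    simp [hb.ne'] at this
  obtain ⟨hmem, hmax⟩ := sorted_head_max _ hl
  constructor
  · obtain ⟨j, hj⟩ := List.mem_ofFn.mp hmem
    exact ⟨j, hj.symm⟩
  · intro j
    exact hmax _ (List.mem_ofFn.mpr ⟨j, rfl⟩)

lemma sv_nonneg {a b : ℕ} (P : Matrix (Fin a) (Fin b) ℝ) : 0 ≤ sv P 0 := by
  rcases Nat.eq_zero_or_pos b with hb | hb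
  · subst hb
    simp [sv, List.ofFn_zero]
  · obtain ⟨⟨j, hj⟩, -⟩ := sv_spec P hb
    rw [hj]; exact Real.sqrt_nonneg _

lemma vnorm_mulVec_le {a b : ℕ} (P : Matrix (Fin a) (Fin b) ℝ) (w : Fin b → ℝ) :
    vnorm (P.mulVec w) ≤ sv P 0 * vnorm w := by
  rcases Nat.eq_zero_or_pos b with hb | hb
  · subst hb
    have h0 : P.mulVec w = 0 := by
      funext i; simp [Matrix.mulVec, dotProduct]
    have hw : vnorm w = 0 := by simp [vnorm]
    rw [h0, hw, mul_zero]
    simp [vnorm]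
  · have hS := Matrix.isHermitian_conjTranspose_mul_self P
    have hpsd := Matrix.posSemidef_conjTranspose_mul_self P
    obtain ⟨⟨j0, hj0⟩, hmax⟩ := sv_spec P hb
    have hs0 : 0 ≤ sv P 0 := sv_nonneg P
    have hmu : ∀ j, hS.eigenvalues j ≤ sv P 0 ^ 2 := by
      intro j
      have h1 : 0 ≤ hS.eigenvalues j := hpsd.eigenvalues_nonneg j
      calc hS.eigenvalues j = Real.sqrt (hS.eigenvalues j) ^ 2 := (Real.sq_sqrt h1).symm
        _ ≤ sv P 0 ^ 2 := pow_le_pow_left₀ (Real.sqrt_nonneg _) (hmax j) 2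
    obtain ⟨y, hy1, hy2⟩ := quad_decomp hS w
    have hct : Pᴴ = Pᵀ := conjTranspose_eq_transpose_of_trivial P
    have key : vnorm (P.mulVec w) ^ 2 ≤ (sv P 0 * vnorm w) ^ 2 := by
      rw [vnorm_sq, dot_mulVec_self, ← hct]
      rw [hy1, mul_pow, vnorm_sq, hy2, Finset.mul_sum]
      refine Finset.sum_le_sum fun j _ => ?_
      exact mul_le_mul_of_nonneg_right (hmu j) (sq_nonneg _)
    calc vnorm (P.mulVec w) = Real.sqrt (vnorm (P.mulVec w) ^ 2) :=
          (Real.sqrt_sq (vnorm_nonneg _)).symm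
      _ ≤ Real.sqrt ((sv P 0 * vnorm w) ^ 2) := Real.sqrt_le_sqrt key
      _ = sv P 0 * vnorm w := Real.sqrt_sq (mul_nonneg hs0 (vnorm_nonneg _))

lemma trace_eq_sum_eig {k : ℕ} {S : Matrix (Fin k) (Fin k) ℝ} (hS : S.IsHermitian) :
    S.trace = ∑ j, hS.eigenvalues j := by
  set U : Matrix (Fin k) (Fin k) ℝ := (hS.eigenvectorUnitary : Matrix (Fin k) (Fin k) ℝ) with hU
  have hUU : star U * U = 1 := by
    exact (Matrix.mem_unitaryGroup_iff').mp hS.eigenvectorUnitary.2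
  conv_lhs => rw [hS.spectral_theorem]
  simp only [Unitary.conjStarAlgAut_apply, Unitary.coe_star]
  rw [Matrix.trace_mul_comm, ← mul_assoc, ← hU, hUU, one_mul, RCLike.ofReal_real_eq_id]
  simp [Matrix.trace_diagonal]

lemma sv_le_frob {a b : ℕ} (P : Matrix (Fin a) (Fin b) ℝ) :
    sv P 0 ≤ Real.sqrt (Pᴴ * P).trace := by
  rcases Nat.eq_zero_or_pos b with hb | hb
  · subst hb
    simpa [sv, List.ofFn_zero] using Real.sqrt_nonneg (Pᴴ * P).trace
  · have hS := Matrix.isHermitian_conjTranspose_mul_self P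
    have hpsd := Matrix.posSemidef_conjTranspose_mul_self P
    obtain ⟨⟨j0, hj0⟩, -⟩ := sv_spec P hb
    rw [hj0, trace_eq_sum_eig hS]
    refine Real.sqrt_le_sqrt ?_
    exact Finset.single_le_sum (fun j _ => hpsd.eigenvalues_nonneg j) (Finset.mem_univ j0)

lemma isUnit_transpose_mul_self {a b : ℕ} (C : Matrix (Fin a) (Fin b) ℝ)
    (hC : Function.Injective C.mulVec) : IsUnit (Cᵀ * C) := by
  rw [← Matrix.mulVec_injective_iff_isUnit]
  intro u v huv
  apply hC
  have hz : (Cᵀ * C) *ᵥ (u - v) = 0 := by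
    rw [Matrix.mulVec_sub, huv, sub_self]
  have hdot : (C *ᵥ (u - v)) ⬝ᵥ (C *ᵥ (u - v)) = 0 := by
    rw [dot_mulVec_self, hz, dotProduct_zero]
  have hCz : C *ᵥ (u - v) = 0 := by
    funext i
    have h1 : ∑ i, (C *ᵥ (u - v)) i ^ 2 = 0 := by
      simpa [dotProduct, sq] using hdot
    have := (Finset.sum_eq_zero_iff_of_nonneg fun i _ => sq_nonneg ((C *ᵥ (u - v)) i)).mp h1
      i (Finset.mem_univ i)
    exact pow_eq_zero_iff (by norm_num) |>.mp this
  rw [Matrix.mulVec_sub] at hCz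
  exact sub_eq_zero.mp hCz

lemma pinv_mul_self {a b : ℕ} (C : Matrix (Fin a) (Fin b) ℝ)
    (hC : Function.Injective C.mulVec) : pinv C * C = 1 := by
  have h := isUnit_transpose_mul_self C hC
  show (Cᵀ * C)⁻¹ * Cᵀ * C = 1
  rw [Matrix.mul_assoc]
  exact Matrix.nonsing_inv_mul _ ((Matrix.isUnit_iff_isUnit_det _).mp h)

/-- Error bound: if `x*` solves the GAVE, `M` is nonsingular and `A + B D` has full column
rank for every diagonal `D` with entries in `[−1,1]`, then
`‖x − x*‖₂ ≤ (max_D ‖(M A + M B D)†‖₂) · ‖M(A x − B|x| − b)‖₂` for all `x`. -/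
theorem gave_error_bound_pinv {m n : ℕ} (A B : Matrix (Fin m) (Fin n) ℝ) (b : Fin m → ℝ)
    (M : Matrix (Fin m) (Fin m) ℝ) (hM : IsUnit M) (xs : Fin n → ℝ)
    (hxs : A.mulVec xs - B.mulVec (fun j => |xs j|) = b)
    (hfull : ∀ d : Fin n → ℝ, (∀ j, |d j| ≤ 1) →
      Function.Injective ((A + B * Matrix.diagonal d).mulVec)) :
    ∀ x : Fin n → ℝ, vnorm (x - xs) ≤
      (⨆ d : {d : Fin n → ℝ // ∀ j, |d j| ≤ 1},
          sv (pinv (M * A + M * B * Matrix.diagonal d.1)) 0) *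
        vnorm (M.mulVec (A.mulVec x - B.mulVec (fun j => |x j|) - b)) := by
  -- the matrix family, as a function of the diagonal entries
  set Cf : (Fin n → ℝ) → Matrix (Fin m) (Fin n) ℝ :=
    fun e => M * A + M * B * Matrix.diagonal e with hCf
  have hCfact : ∀ e, Cf e = M * (A + B * Matrix.diagonal e) := by
    intro e
    show M * A + M * B * Matrix.diagonal e = _
    rw [Matrix.mul_add, Matrix.mul_assoc]
  have hinj : ∀ e : Fin n → ℝ, (∀ j, |e j| ≤ 1) → Function.Injective (Cf e).mulVec := by
    intro e he u v huv
    apply hfull e he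
    apply Matrix.mulVec_injective_iff_isUnit.mpr hM
    rw [hCfact] at huv
    rwa [← Matrix.mulVec_mulVec, ← Matrix.mulVec_mulVec] at huv
  -- boundedness of the singular-value family
  have hbdd : BddAbove (Set.range fun d : {d : Fin n → ℝ // ∀ j, |d j| ≤ 1} =>
      sv (pinv (M * A + M * B * Matrix.diagonal d.1)) 0) := by
    set K : Set (Fin n → ℝ) := Set.Icc (fun _ => -1) (fun _ => 1) with hK
    have hKc : IsCompact K := isCompact_Icc
    have hmem : ∀ e : Fin n → ℝ, (∀ j, |e j| ≤ 1) → e ∈ K := by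
      intro e he
      rw [hK, Set.mem_Icc]
      constructor <;> intro j
      · exact (abs_le.mp (he j)).1
      · exact (abs_le.mp (he j)).2
    have hCont : Continuous Cf :=
      continuous_const.add (Continuous.matrix_mul continuous_const
        (Continuous.matrix_diagonal continuous_id))
    have hne : ∀ e ∈ K, ((Cf e)ᵀ * Cf e).det ≠ 0 := by
      intro e heK
      have he : ∀ j, |e j| ≤ 1 := by
        intro j
        rw [hK, Set.mem_Icc] at heK
        exact abs_le.mpr ⟨heK.1 j, heK.2 j⟩
      exact ((Matrix.isUnit_iff_isUnit_det _).mp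
        (isUnit_transpose_mul_self (Cf e) (hinj e he))).ne_zero
    have hdetinv : ContinuousOn (fun e => (((Cf e)ᵀ * Cf e).det)⁻¹) K :=
      ContinuousOn.inv₀ ((hCont.matrix_transpose.matrix_mul hCont).matrix_det).continuousOn hne
    set G : ℝ × (Fin n → ℝ) → ℝ := fun p =>
      Real.sqrt ((((p.1 • ((Cf p.2)ᵀ * Cf p.2).adjugate) * (Cf p.2)ᵀ)ᴴ *
        ((p.1 • ((Cf p.2)ᵀ * Cf p.2).adjugate) * (Cf p.2)ᵀ)).trace) with hG
    have hCf2 : Continuous fun p : ℝ × (Fin n → ℝ) => Cf p.2 := hCont.comp continuous_snd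
    have hQ : Continuous fun p : ℝ × (Fin n → ℝ) =>
        (p.1 • ((Cf p.2)ᵀ * Cf p.2).adjugate) * (Cf p.2)ᵀ :=
      (Continuous.smul continuous_fst
        ((hCf2.matrix_transpose.matrix_mul hCf2).matrix_adjugate)).matrix_mul
        hCf2.matrix_transpose
    have hGc : Continuous G :=
      Real.continuous_sqrt.comp ((hQ.matrix_conjTranspose.matrix_mul hQ).matrix_trace)
    have hfc : ContinuousOn
        (fun e => Real.sqrt (((pinv (Cf e))ᴴ * pinv (Cf e)).trace)) K := by
      have heq : ∀ e, Real.sqrt (((pinv (Cf e))ᴴ * pinv (Cf e)).trace) =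
          G ((((Cf e)ᵀ * Cf e).det)⁻¹, e) := by
        intro e
        have hpe : pinv (Cf e) =
            ((((Cf e)ᵀ * Cf e).det)⁻¹ • ((Cf e)ᵀ * Cf e).adjugate) * (Cf e)ᵀ := by
          rw [pinv, Matrix.inv_def, Ring.inverse_eq_inv]
        rw [hG]
        simp only [← hpe]
      simp only [heq]
      exact hGc.comp_continuousOn (hdetinv.prodMk continuousOn_id)
    obtain ⟨R, hR⟩ := hKc.exists_bound_of_continuousOn hfc
    refine ⟨R, ?_⟩
    rintro v ⟨d0, rfl⟩
    calc sv (pinv (M * A + M * B * Matrix.diagonal d0.1)) 0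
        ≤ Real.sqrt (((pinv (Cf d0.1))ᴴ * pinv (Cf d0.1)).trace) := sv_le_frob _
      _ ≤ |Real.sqrt (((pinv (Cf d0.1))ᴴ * pinv (Cf d0.1)).trace)| := le_abs_self _
      _ ≤ R := by
          have := hR d0.1 (hmem d0.1 d0.2)
          simpa [Real.norm_eq_abs] using this
  intro x
  set r : Fin m → ℝ := A.mulVec x - B.mulVec (fun j => |x j|) - b with hr
  set d : Fin n → ℝ :=
    fun j => if x j - xs j = 0 then 0 else (|xs j| - |x j|) / (x j - xs j) with hd
  have hdle : ∀ j, |d j| ≤ 1 := by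
    intro j
    by_cases h : x j - xs j = 0
    · simp [hd, h]
    · simp only [hd, h, if_false]
      rw [abs_div]
      refine div_le_one_of_le₀ ?_ (abs_nonneg _)
      calc |(|xs j| - |x j|)| ≤ |xs j - x j| := abs_abs_sub_abs_le_abs_sub _ _
        _ = |x j - xs j| := abs_sub_comm _ _
  have hdiag : ∀ j, d j * (x j - xs j) = |xs j| - |x j| := by
    intro j
    by_cases h : x j - xs j = 0
    · have hxj : x j = xs j := sub_eq_zero.mp h
      simp [hd, h, hxj]
    · simp only [hd, h, if_false]
      field_simp
  set C : Matrix (Fin m) (Fin n) ℝ := Cf d with hCd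
  have hinjC : Function.Injective C.mulVec := hinj d hdle
  have hdv : Matrix.diagonal d *ᵥ (x - xs) = (fun j => |xs j|) - (fun j => |x j|) := by
    funext j
    rw [Matrix.mulVec_diagonal]
    rw [Pi.sub_apply, Pi.sub_apply]
    exact hdiag j
  have h2 : (A + B * Matrix.diagonal d) *ᵥ (x - xs) = r := by
    rw [Matrix.add_mulVec, ← Matrix.mulVec_mulVec, hdv, hr, ← hxs]
    funext i
    simp only [Matrix.mulVec_sub, Pi.sub_apply, Pi.add_apply]
    ring
  have hkey : C *ᵥ (x - xs) = M *ᵥ r := by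
    rw [hCd, hCfact, ← Matrix.mulVec_mulVec, h2]
  have hx : x - xs = (pinv C) *ᵥ (M *ᵥ r) := by
    rw [← hkey, Matrix.mulVec_mulVec, pinv_mul_self C hinjC, Matrix.one_mulVec]
  have hsvle : sv (pinv C) 0 ≤
      ⨆ d : {d : Fin n → ℝ // ∀ j, |d j| ≤ 1},
        sv (pinv (M * A + M * B * Matrix.diagonal d.1)) 0 :=
    le_ciSup hbdd ⟨d, hdle⟩
  calc vnorm (x - xs) = vnorm ((pinv C) *ᵥ (M *ᵥ r)) := by rw [hx]
    _ ≤ sv (pinv C) 0 * vnorm (M *ᵥ r) := vnorm_mulVec_le _ _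
    _ ≤ (⨆ d : {d : Fin n → ℝ // ∀ j, |d j| ≤ 1},
          sv (pinv (M * A + M * B * Matrix.diagonal d.1)) 0) * vnorm (M *ᵥ r) :=
        mul_le_mul_of_nonneg_right hsvle (vnorm_nonneg _)
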